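/- The positivity-preserving density limiter ρ̂(x) = θ(ρ(x) - ρ̄) + ρ̄ with θ = min{(ρ̄ - ε)/(ρ̄ - ρ_min), 1}, where ρ_min = min over a finite point set S of ρ(x), 0 < ε ≤ ρ̄, and ρ̄ is the average, satisfies ρ̂(x) ≥ ε for all x ∈ S, and the cell average of ρ̂ equals ρ̄ whenever the average of ρ equals ρ̄. -/

import Mathlib

/-- The positivity-preserving density limiter keeps the values at the quadrature
points at least `ε` and preserves the cell average. -/
theorem density_limiter_properties
    (P : Polynomial ℝ) (a b : ℝ) (hab : a < b)
    (S : Finset ℝ) (hS : S.Nonempty)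
    (ρbar ε : ℝ) (hε : 0 < ε) (hεle : ε ≤ ρbar) :
    let ρmin := S.inf' hS (fun x => P.eval x)
    let θ : ℝ := if ε ≤ ρmin then 1 else (ρbar - ε) / (ρbar - ρmin)
    (∀ x ∈ S, ε ≤ θ * (P.eval x - ρbar) + ρbar) ∧
    ((1 / (b - a)) * ∫ t in a..b, P.eval t = ρbar →
      (1 / (b - a)) * ∫ t in a..b, (θ * (P.eval t - ρbar) + ρbar) = ρbar) := by
  intro ρmin θ
  constructor
  · intro x hx
    have hmin : ρmin ≤ P.eval x := Finset.inf'_le _ hx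
    by_cases h : ε ≤ ρmin
    · simp only [θ, if_pos h]
      nlinarith
    · simp only [θ, if_neg h]
      push_neg at h
      have hpos : 0 < ρbar - ρmin := by linarith
      have hθ0 : 0 ≤ (ρbar - ε) / (ρbar - ρmin) := div_nonneg (by linarith) hpos.le
      have key : (ρbar - ε) / (ρbar - ρmin) * (ρmin - ρbar) = -(ρbar - ε) := by
        field_simp
        ring
      have : (ρbar - ε) / (ρbar - ρmin) * (ρmin - ρbar) ≤
          (ρbar - ε) / (ρbar - ρmin) * (P.eval x - ρbar) :=
        mul_le_mul_of_nonneg_left (by linarith) hθ0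
      linarith
  · intro havg
    have hInt : IntervalIntegrable (fun t => P.eval t) MeasureTheory.volume a b :=
      (Polynomial.continuous P).intervalIntegrable a b
    have h1 : (∫ t in a..b, (θ * (P.eval t - ρbar) + ρbar)) =
        θ * ((∫ t in a..b, P.eval t) - (b - a) * ρbar) + (b - a) * ρbar := by
      rw [intervalIntegral.integral_add ((hInt.sub (intervalIntegrable_const)).const_mul θ)
        intervalIntegrable_const,
        intervalIntegral.integral_const_mul,
        intervalIntegral.integral_sub hInt intervalIntegrable_const,
        intervalIntegral.integral_const]
      simp [smul_eq_mul]
    have hne : b - a ≠ 0 := by linarith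
    have hI : (∫ t in a..b, P.eval t) = (b - a) * ρbar := by
      field_simp at havg
      linarith [havg]
    rw [h1, hI]
    field_simp
    ring
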